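/- Suppose S : ℝ² → M₂(ℂ) is smooth with S² = I, and P : ℝ² → M₂(ℂ) satisfies both i·∂S/∂x + [S,[S,P]] = 0 and ∂S/∂t - ∂/∂x[S,P] = 0. Then S satisfies the matrix Heisenberg magnet equation ∂S/∂t = (1/(4i))[S, ∂²S/∂x²]. -/

import Mathlib

set_option maxHeartbeats 1000000

attribute [local instance] Matrix.normedAddCommGroup Matrix.normedSpace

lemma hasDerivAt_mul2 {f g : ℝ → Matrix (Fin 2) (Fin 2) ℂ}
    {f' g' : Matrix (Fin 2) (Fin 2) ℂ} {x : ℝ}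
    (hf : HasDerivAt f f' x) (hg : HasDerivAt g g' x) :
    HasDerivAt (fun y => f y * g y) (f' * g x + f x * g') x := by
  have hfe : ∀ i j, HasDerivAt (fun y => f y i j) (f' i j) x := fun i j =>
    (hasDerivAt_pi.1 ((hasDerivAt_pi (φ' := f')).1 hf i) j)
  have hge : ∀ i j, HasDerivAt (fun y => g y i j) (g' i j) x := fun i j =>
    (hasDerivAt_pi.1 ((hasDerivAt_pi (φ' := g')).1 hg i) j)
  refine (hasDerivAt_pi (φ' := f' * g x + f x * g')).2 ?_
  intro i
  rw [hasDerivAt_pi]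
  intro j
  have key : HasDerivAt (fun y => ∑ k, f y i k * g y k j)
      (∑ k, (f' i k * g x k j + f x i k * g' k j)) x :=
    HasDerivAt.fun_sum fun k _ => (hfe i k).mul (hge k j)
  have h1 : (fun y => (f y * g y) i j) = fun y => ∑ k, f y i k * g y k j := by
    funext y; rw [Matrix.mul_apply]
  have h2 : (f' * g x + f x * g') i j = ∑ k, (f' i k * g x k j + f x i k * g' k j) := by
    simp [Matrix.add_apply, Matrix.mul_apply, Finset.sum_add_distrib]
  rw [h1, h2]
  exact key

/-- If `S² = I`, `i Sₓ + [S,[S,P]] = 0` and `Sₜ - ∂ₓ[S,P] = 0`, then `S` satisfies the matrix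
Heisenberg magnet equation `Sₜ = (1/(4i))[S, Sₓₓ]`. -/
theorem heisenberg_magnet_matrix_form
    (S P Sx Sxx St Cx : ℝ → ℝ → Matrix (Fin 2) (Fin 2) ℂ)
    (hS2 : ∀ x t, S x t * S x t = 1)
    (hSx : ∀ x t, HasDerivAt (fun y => S y t) (Sx x t) x)
    (hSxx : ∀ x t, HasDerivAt (fun y => Sx y t) (Sxx x t) x)
    (hSt : ∀ x t, HasDerivAt (fun s => S x s) (St x t) t)
    (hCx : ∀ x t, HasDerivAt
      (fun y => S y t * P y t - P y t * S y t) (Cx x t) x)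
    (heq1 : ∀ x t, Complex.I • Sx x t +
      (S x t * (S x t * P x t - P x t * S x t)
        - (S x t * P x t - P x t * S x t) * S x t) = 0)
    (heq2 : ∀ x t, St x t - Cx x t = 0) :
    ∀ x t, St x t = (1 / (4 * Complex.I)) •
      (S x t * Sxx x t - Sxx x t * S x t) := by
  intro x t
  -- the commutator as a function of the space variable
  set Cf : ℝ → Matrix (Fin 2) (Fin 2) ℂ :=
    fun y => S y t * P y t - P y t * S y t with hCfdef
  -- pointwise anticommutation of S and the commutator
  have hanti : ∀ y, S y t * Cf y + Cf y * S y t = 0 := by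
    intro y
    have h : S y t * Cf y + Cf y * S y t
        = S y t * S y t * P y t - P y t * (S y t * S y t) := by
      simp only [hCfdef]; noncomm_ring
    rw [h, hS2 y t]; simp
  -- pointwise value of C * S and S * C
  have hCS : ∀ y, Cf y * S y t = (Complex.I / 2) • Sx y t := by
    intro y
    have h1 := heq1 y t
    have h2 : S y t * Cf y = -(Cf y * S y t) :=
      eq_neg_of_add_eq_zero_left (hanti y)
    have h3 : (2:ℂ) • (Cf y * S y t) = Complex.I • Sx y t := by
      have : Complex.I • Sx y t + (S y t * Cf y - Cf y * S y t) = 0 := h1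
      rw [h2] at this
      rw [two_smul]
      linear_combination (norm := abel) -this
    calc Cf y * S y t = ((1:ℂ)/2) • ((2:ℂ) • (Cf y * S y t)) := by
          rw [smul_smul]; norm_num
      _ = ((1:ℂ)/2) • (Complex.I • Sx y t) := by rw [h3]
      _ = (Complex.I / 2) • Sx y t := by rw [smul_smul]; ring_nf
  have hSC : ∀ y, S y t * Cf y = (-(Complex.I / 2)) • Sx y t := by
    intro y
    rw [eq_neg_of_add_eq_zero_left (hanti y), hCS y, neg_smul]
  -- abbreviations at the point (x, t)
  set A := S x t
  set X := Sx x t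
  set X2 := Sxx x t
  set T := St x t
  set D := Cx x t
  set C := Cf x with hCdef
  have hA : A * A = 1 := hS2 x t
  -- space anticommutation: X*A + A*X = 0
  have hXA : X * A + A * X = 0 := by
    have hp := hasDerivAt_mul2 (hSx x t) (hSx x t)
    have hc : HasDerivAt (fun y => S y t * S y t) 0 x := by
      have he : (fun y => S y t * S y t) = fun _ => (1 : Matrix (Fin 2) (Fin 2) ℂ) :=
        funext fun y => hS2 y t
      rw [he]; exact hasDerivAt_const x 1
    exact hp.unique hc
  -- time anticommutation: T*A + A*T = 0
  have hTA : T * A + A * T = 0 := by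
    have hp := hasDerivAt_mul2 (hSt x t) (hSt x t)
    have hc : HasDerivAt (fun s => S x s * S x s) 0 t := by
      have he : (fun s => S x s * S x s) = fun _ => (1 : Matrix (Fin 2) (Fin 2) ℂ) :=
        funext fun s => hS2 x s
      rw [he]; exact hasDerivAt_const t 1
    exact hp.unique hc
  -- derivative of C*S and S*C
  have hd2 : D * A + C * X = (Complex.I / 2) • X2 := by
    have hp := hasDerivAt_mul2 (hCx x t) (hSx x t)
    have hq : HasDerivAt (fun y => Cf y * S y t) ((Complex.I / 2) • X2) x := by
      have he : (fun y => Cf y * S y t) = fun y => (Complex.I / 2) • Sx y t :=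
        funext hCS
      rw [he]; exact (hSxx x t).const_smul (Complex.I / 2)
    exact hp.unique hq
  have hd1 : X * C + A * D = (-(Complex.I / 2)) • X2 := by
    have hp := hasDerivAt_mul2 (hSx x t) (hCx x t)
    have hq : HasDerivAt (fun y => S y t * Cf y) ((-(Complex.I / 2)) • X2) x := by
      have he : (fun y => S y t * Cf y) = fun y => (-(Complex.I / 2)) • Sx y t :=
        funext hSC
      rw [he]; exact (hSxx x t).const_smul (-(Complex.I / 2))
    exact hp.unique hq
  have hT : T = D := sub_eq_zero.mp (heq2 x t)
  -- the 4-fold identity for the time derivative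
  have h1 : A * T = -(T * A) := eq_neg_of_add_eq_zero_right hTA
  have key1 : A * (A * T - T * A) - (A * T - T * A) * A = (4:ℂ) • T := by
    calc A * (A * T - T * A) - (A * T - T * A) * A
        = (A * A) * T + T * (A * A) - (A * T) * A - (A * T) * A := by noncomm_ring
      _ = (A * A) * T + T * (A * A) - (-(T * A)) * A - (-(T * A)) * A := by rw [h1]
      _ = (A * A) * T + T * (A * A) + T * (A * A) + T * (A * A) := by noncomm_ring
      _ = (4:ℂ) • T := by rw [hA]; simp only [one_mul, mul_one]; module
  -- express A*D - D*A
  have key2 : A * D - D * A = (-Complex.I) • X2 - X * C + C * X := by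
    have hAD : A * D = (-(Complex.I / 2)) • X2 - X * C := eq_sub_of_add_eq' hd1
    have hDA : D * A = (Complex.I / 2) • X2 - C * X := eq_sub_of_add_eq hd2
    rw [hAD, hDA]; module
  -- the four auxiliary products
  have hAX : A * X = -(X * A) := eq_neg_of_add_eq_zero_right hXA
  have hXA' : X * A = -(A * X) := eq_neg_of_add_eq_zero_left hXA
  have hSCx : A * C = (-(Complex.I / 2)) • X := hSC x
  have hCSx : C * A = (Complex.I / 2) • X := hCS x
  have p1 : A * (X * C) = (Complex.I / 2) • (X * X) := by
    calc A * (X * C) = (A * X) * C := by rw [mul_assoc]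
      _ = (-(X * A)) * C := by rw [hAX]
      _ = -(X * (A * C)) := by noncomm_ring
      _ = -(X * ((-(Complex.I / 2)) • X)) := by rw [hSCx]
      _ = (Complex.I / 2) • (X * X) := by rw [mul_smul_comm]; module
  have p2 : (X * C) * A = (Complex.I / 2) • (X * X) := by
    calc (X * C) * A = X * (C * A) := by rw [mul_assoc]
      _ = X * ((Complex.I / 2) • X) := by rw [hCSx]
      _ = (Complex.I / 2) • (X * X) := by rw [mul_smul_comm]
  have p3 : A * (C * X) = (-(Complex.I / 2)) • (X * X) := by
    calc A * (C * X) = (A * C) * X := by rw [mul_assoc]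
      _ = ((-(Complex.I / 2)) • X) * X := by rw [hSCx]
      _ = (-(Complex.I / 2)) • (X * X) := by rw [smul_mul_assoc]
  have p4 : (C * X) * A = (-(Complex.I / 2)) • (X * X) := by
    calc (C * X) * A = C * (X * A) := by rw [mul_assoc]
      _ = C * (-(A * X)) := by rw [hXA']
      _ = -((C * A) * X) := by noncomm_ring
      _ = -(((Complex.I / 2) • X) * X) := by rw [hCSx]
      _ = (-(Complex.I / 2)) • (X * X) := by rw [smul_mul_assoc]; module
  -- combine
  have h4 : (4:ℂ) • T = (-Complex.I) • (A * X2 - X2 * A) := by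
    calc (4:ℂ) • T = A * (A * T - T * A) - (A * T - T * A) * A := key1.symm
      _ = A * (A * D - D * A) - (A * D - D * A) * A := by rw [hT]
      _ = A * ((-Complex.I) • X2 - X * C + C * X)
            - ((-Complex.I) • X2 - X * C + C * X) * A := by rw [key2]
      _ = (-Complex.I) • (A * X2) - A * (X * C) + A * (C * X)
            - ((-Complex.I) • (X2 * A) - (X * C) * A + (C * X) * A) := by
          simp only [mul_sub, sub_mul, mul_add, add_mul, mul_smul_comm, smul_mul_assoc]
      _ = (-Complex.I) • (A * X2) - (Complex.I / 2) • (X * X)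
            + (-(Complex.I / 2)) • (X * X)
            - ((-Complex.I) • (X2 * A) - (Complex.I / 2) • (X * X)
              + (-(Complex.I / 2)) • (X * X)) := by rw [p1, p2, p3, p4]
      _ = (-Complex.I) • (A * X2 - X2 * A) := by module
  calc T = ((1:ℂ)/4) • ((4:ℂ) • T) := by rw [smul_smul]; norm_num
    _ = ((1:ℂ)/4) • ((-Complex.I) • (A * X2 - X2 * A)) := by rw [h4]
    _ = (1 / (4 * Complex.I)) • (A * X2 - X2 * A) := by
        rw [smul_smul]
        congr 1
        field_simp
        ring_nf
        simp [Complex.I_sq]
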